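/- Fix integers r ≥ 0, x ≥ 0 and non-decreasing non-negative integer sequences e_1 ≤ ⋯ ≤ e_r, f_1 ≤ ⋯ ≤ f_{r+x} (conventions: e_i = 0 for i < 1). Suppose V is an integer with V ≥ Σ_{i=1}^{r+x} max{e_{i−x}, f_i} − Σ_{i=1}^{r+x} f_i. Then the sequence (a_j)_{j=1}^{x} defined by a_1 = V + Σ_{i=1}^{r+x} f_i − Σ_{i=1}^{r+x−1} max{e_{i−x+1}, f_i} − d and a_j = Σ_{i=1}^{r+x−j+1} max{e_{i−x+j−1}, f_i} − Σ_{i=1}^{r+x−j} max{e_{i−x+j}, f_i} − d for 2 ≤ j ≤ x (where d is any fixed integer) is non-increasing: a_1 ≥ a_2 ≥ ⋯ ≥ a_x. -/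
import Mathlib

/-- Submodularity of `max`. -/
lemma stmt10_submax {A B u v : ℤ} (hAB : A ≤ B) (huv : u ≤ v) :
    max A u + max B v ≤ max B u + max A v := by
  simp only [max_def]; split_ifs <;> omega

lemma stmt10_shift (a b : ℤ) (G : ℤ → ℤ) :
    ∑ i ∈ Finset.Icc a b, G (i+1) = ∑ i ∈ Finset.Icc (a+1) (b+1), G i := by
  rw [← Finset.map_add_right_Icc, Finset.sum_map]; rfl

lemma stmt10_top (a b : ℤ) (G : ℤ → ℤ) (h : a ≤ b) :
    ∑ i ∈ Finset.Icc a b, G i = ∑ i ∈ Finset.Icc a (b-1), G i + G b := by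
  have : Finset.Icc a b = insert b (Finset.Icc a (b-1)) := by
    ext i; simp [Finset.mem_Icc]; omega
  rw [this, Finset.sum_insert (by simp [Finset.mem_Icc])]; ring

lemma stmt10_bot (a b : ℤ) (G : ℤ → ℤ) (h : a ≤ b) :
    ∑ i ∈ Finset.Icc a b, G i = G a + ∑ i ∈ Finset.Icc (a+1) b, G i := by
  have : Finset.Icc a b = insert a (Finset.Icc (a+1) b) := by
    ext i; simp [Finset.mem_Icc]; omega
  rw [this, Finset.sum_insert (by simp [Finset.mem_Icc])]

/-- The sequence `(a_j)` built from `V`, `e`, `f`, `d` is non-increasing. -/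
theorem stmt10 (r x : ℕ) (d V : ℤ) (e f : ℤ → ℤ)
    (he0 : ∀ i : ℤ, i < 1 → e i = 0)
    (henn : ∀ i : ℤ, 0 ≤ e i)
    (hemono : ∀ i : ℤ, 1 ≤ i → i < (r : ℤ) → e i ≤ e (i + 1))
    (hfnn : ∀ i : ℤ, 0 ≤ f i)
    (hfmono : ∀ i : ℤ, 1 ≤ i → i < (r : ℤ) + x → f i ≤ f (i + 1))
    (hV : ∑ i ∈ Finset.Icc (1 : ℤ) ((r : ℤ) + x), max (e (i - x)) (f i)
        - ∑ i ∈ Finset.Icc (1 : ℤ) ((r : ℤ) + x), f i ≤ V)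
    (a : ℕ → ℤ)
    (ha1 : 1 ≤ x → a 1 = V + ∑ i ∈ Finset.Icc (1 : ℤ) ((r : ℤ) + x), f i
        - (∑ i ∈ Finset.Icc (1 : ℤ) ((r : ℤ) + x - 1), max (e (i - x + 1)) (f i)) - d)
    (haj : ∀ j : ℕ, 2 ≤ j → j ≤ x →
      a j = (∑ i ∈ Finset.Icc (1 : ℤ) ((r : ℤ) + x - j + 1), max (e (i - x + j - 1)) (f i))
        - (∑ i ∈ Finset.Icc (1 : ℤ) ((r : ℤ) + x - j), max (e (i - x + j)) (f i)) - d) :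
    ∀ j : ℕ, 1 ≤ j → j < x → a (j + 1) ≤ a j := by
  set T : ℤ → ℤ := fun k => ∑ i ∈ Finset.Icc (1 : ℤ) ((r : ℤ) + x - k),
    max (e (i - x + k)) (f i) with hT
  have hTeq : ∀ k m l : ℤ, m = (r : ℤ) + x - k → l = k →
      (∑ i ∈ Finset.Icc (1 : ℤ) m, max (e (i - x + l)) (f i)) = T k := by
    intro k m l hm hl
    simp only [hT]
    subst hm hl
    rfl
  -- convexity of T
  have convex : ∀ k : ℤ, 1 ≤ k → k < (x : ℤ) → 2 * T k ≤ T (k - 1) + T (k + 1) := by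
    intro k hk1 hk2
    set N : ℤ := (r : ℤ) + x - k with hN
    have hN1 : 1 ≤ N := by omega
    set g : ℤ → ℤ → ℤ := fun l i => max (e (i - x + l)) (f i) with hg
    have hTk : T k = ∑ i ∈ Finset.Icc (1 : ℤ) N, g k i :=
      (hTeq k N k (by omega) rfl).symm
    have hTk1 : T (k + 1) = ∑ i ∈ Finset.Icc (1 : ℤ) (N - 1), g (k + 1) i :=
      (hTeq (k + 1) (N - 1) (k + 1) (by omega) rfl).symm
    have hTkm : T (k - 1) = ∑ i ∈ Finset.Icc (1 : ℤ) (N + 1), g (k - 1) i :=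
      (hTeq (k - 1) (N + 1) (k - 1) (by omega) rfl).symm
    have key : ∑ i ∈ Finset.Icc (1 : ℤ) (N - 1), (g k i + g k (i + 1))
        ≤ ∑ i ∈ Finset.Icc (1 : ℤ) (N - 1), (g (k + 1) i + g (k - 1) (i + 1)) := by
      apply Finset.sum_le_sum
      intro i hi
      simp only [Finset.mem_Icc] at hi
      have hAB : e (i - x + k) ≤ e (i - x + k + 1) := by
        rcases lt_or_ge (i - x + k) 1 with h | h
        · rw [he0 _ h]; exact henn _
        · exact hemono _ h (by omega)
      have huv : f i ≤ f (i + 1) := hfmono i hi.1 (by omega)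
      have hsub := stmt10_submax hAB huv
      simp only [hg]
      calc max (e (i - x + k)) (f i) + max (e (i + 1 - x + k)) (f (i + 1))
          = max (e (i - x + k)) (f i) + max (e (i - x + k + 1)) (f (i + 1)) := by
            rw [show i + 1 - (x:ℤ) + k = i - x + k + 1 by ring]
        _ ≤ max (e (i - x + k + 1)) (f i) + max (e (i - x + k)) (f (i + 1)) := hsub
        _ = max (e (i - x + (k + 1))) (f i) + max (e (i + 1 - x + (k - 1))) (f (i + 1)) := by
            rw [show i - (x:ℤ) + k + 1 = i - x + (k + 1) by ring,
              show i - (x:ℤ) + k = i + 1 - x + (k - 1) by ring]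
    have h1 : ∑ i ∈ Finset.Icc (1 : ℤ) N, g k i
        = ∑ i ∈ Finset.Icc (1 : ℤ) (N - 1), g k i + g k N := stmt10_top 1 N (g k) hN1
    have h2 : ∑ i ∈ Finset.Icc (1 : ℤ) (N - 1), g k (i + 1)
        = ∑ i ∈ Finset.Icc (1 : ℤ) N, g k i - g k 1 := by
      rw [stmt10_shift, stmt10_bot 1 N (g k) hN1]
      rw [show (1:ℤ) + 1 = 2 by ring, show N - 1 + 1 = N by ring]
      ring
    have h4 : ∑ i ∈ Finset.Icc (1 : ℤ) (N - 1), g (k - 1) (i + 1)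
        = ∑ i ∈ Finset.Icc (1 : ℤ) (N + 1), g (k - 1) i - g (k - 1) 1 - g (k - 1) (N + 1) := by
      rw [stmt10_shift, show (1:ℤ) + 1 = 2 by ring, show N - 1 + 1 = N by ring,
        stmt10_bot 1 (N + 1) (g (k - 1)) (by omega),
        show (1:ℤ) + 1 = 2 by ring,
        stmt10_top 2 (N + 1) (g (k - 1)) (by omega),
        show N + 1 - 1 = N by ring]
      ring
    rw [Finset.sum_add_distrib, Finset.sum_add_distrib, h2, h4] at key
    have hb1 : g k 1 = g (k - 1) 1 := by
      simp only [hg]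
      rw [he0 (1 - (x:ℤ) + k) (by omega), he0 (1 - (x:ℤ) + (k - 1)) (by omega)]
    have hb2 : g k N ≤ g (k - 1) (N + 1) := by
      simp only [hg]
      have hf : f N ≤ f (N + 1) := hfmono N hN1 (by omega)
      rw [show N - (x:ℤ) + k = N + 1 - x + (k - 1) by ring]
      exact max_le (le_max_left _ _) (le_trans hf (le_max_right _ _))
    rw [hTk, hTk1, hTkm, h1]
    omega
  intro j hj1 hjx
  have hjx' : (j : ℤ) < (x : ℤ) := by exact_mod_cast hjx
  have hj1' : (1 : ℤ) ≤ (j : ℤ) := by exact_mod_cast hj1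
  have hconv := convex (j : ℤ) hj1' hjx'
  have hA : a (j + 1) = T (j : ℤ) - T ((j : ℤ) + 1) - d := by
    rw [haj (j + 1) (by omega) (by omega)]
    push_cast
    rw [hTeq ((j:ℤ) + 1) ((r:ℤ) + x - ((j:ℤ) + 1)) ((j:ℤ) + 1) (by ring) rfl]
    congr 1
    congr 1
    rw [← hTeq (j:ℤ) ((r:ℤ) + x - ((j:ℤ) + 1) + 1) (j:ℤ) (by ring) rfl]
    exact Finset.sum_congr rfl fun i _ => by
      rw [show i - (x:ℤ) + ((j:ℤ) + 1) - 1 = i - x + (j:ℤ) by ring]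
  rcases eq_or_lt_of_le hj1 with h1 | h2
  · -- j = 1
    have hj : j = 1 := h1.symm
    subst hj
    have hx2 : 2 ≤ x := by omega
    simp only [Nat.cast_one] at hA hconv
    rw [hA, ha1 (by omega)]
    have hT0 : ∑ i ∈ Finset.Icc (1 : ℤ) ((r : ℤ) + x), max (e (i - x)) (f i) = T 0 := by
      rw [← hTeq 0 ((r:ℤ) + x) 0 (by ring) rfl]
      exact Finset.sum_congr rfl fun i _ => by
        rw [show i - (x:ℤ) + 0 = i - x by ring]
    have hT1 : ∑ i ∈ Finset.Icc (1 : ℤ) ((r : ℤ) + x - 1), max (e (i - x + 1)) (f i) = T 1 :=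
      hTeq 1 ((r:ℤ) + x - 1) 1 rfl rfl
    rw [hT0] at hV
    rw [hT1]
    rw [show (1:ℤ) - 1 = 0 by ring] at hconv
    omega
  · -- j ≥ 2
    have hB : a j = T ((j : ℤ) - 1) - T (j : ℤ) - d := by
      rw [haj j (by omega) (by omega)]
      rw [hTeq (j:ℤ) ((r:ℤ) + x - (j:ℤ)) (j:ℤ) rfl rfl]
      congr 1
      congr 1
      rw [← hTeq ((j:ℤ) - 1) ((r:ℤ) + x - (j:ℤ) + 1) ((j:ℤ) - 1) (by ring) rfl]
      exact Finset.sum_congr rfl fun i _ => by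
        rw [show i - (x:ℤ) + (j:ℤ) - 1 = i - x + ((j:ℤ) - 1) by ring]
    rw [hA, hB]
    omega
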